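/- Let (W, 𝒲, P) be a probability space, G : W → ℝ^{q×n} and g : W → ℝ^q measurable, and Z(w) := {ζ ∈ ℝ^n : G(w)·ζ ≤ g(w)}. Assume Z(w) is bounded for every w, ζ_c ∈ Z(w) for every w, and let S ⊆ ℝ^n be compact convex with 0 ∈ S and S ≠ {0}. Define σ(w) := max{σ ≥ 0 : {ζ_c + σ·s : s ∈ S} ⊆ Z(w)} (which exists), and assume σ : W → [0,∞) is measurable. Fix ε, β ∈ (0,1) and N ≥ (1+√3)²·ln(1/β)/ε, let w^{(1)}, …, w^{(N)} be i.i.d. with law P, and let σ* be the ⌈εN/2⌉-th smallest value among σ(w^{(1)}), …, σ(w^{(N)}). Then, with probability at least 1−β over the draw of the N samples, {ζ_c + σ*·s : s ∈ S} ⊆ Z^P, where Z^P := {ζ ∈ ℝ^n : P({w : G(w)·ζ ≤ g(w)}) ≥ 1 − ε}. -/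

import Mathlib

open MeasureTheory

/-- Matrices over `ℝ` carry the product measurable structure of the pi type. -/
instance matrixMeasurableSpace {q n : ℕ} : MeasurableSpace (Matrix (Fin q) (Fin n) ℝ) :=
  inferInstanceAs (MeasurableSpace (Fin q → Fin n → ℝ))

/-- The `r`-th smallest value among `X 1, …, X N`: the smallest `x` such that at least
`r` of the values are `≤ x`. -/
noncomputable def orderStat {N : ℕ} (X : Fin N → ℝ) (r : ℕ) : ℝ :=
  sInf {x : ℝ | r ≤ (Finset.univ.filter fun i => X i ≤ x).card}

open scoped ENNReal

set_option maxHeartbeats 1000000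

lemma convex_polyZ {q n : ℕ} (M : Matrix (Fin q) (Fin n) ℝ) (c : Fin q → ℝ) :
    Convex ℝ {ζ : Fin n → ℝ | M.mulVec ζ ≤ c} := by
  intro x hx y hy a b ha hb hab
  simp only [Set.mem_setOf_eq, Pi.le_def] at *
  intro j
  have h : M.mulVec (a • x + b • y) j = a * M.mulVec x j + b * M.mulVec y j := by
    rw [Matrix.mulVec_add, Matrix.mulVec_smul, Matrix.mulVec_smul]
    simp [smul_eq_mul]
  rw [h]
  calc a * M.mulVec x j + b * M.mulVec y j ≤ a * c j + b * c j := by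
        have h1 := mul_le_mul_of_nonneg_left (hx j) ha
        have h2 := mul_le_mul_of_nonneg_left (hy j) hb
        linarith
    _ = c j := by rw [← add_mul, hab, one_mul]

/-- Proposition 1 (Probabilistic Scaling of the SAS): if `σ*` is the
`⌈εN/2⌉`-th smallest scaling factor of `N ≥ (1+√3)² ln(1/β)/ε` i.i.d. uncertainty
samples, then with probability at least `1-β` over the samples the scaled SAS
`ζ_c + σ* • S` is contained in the `ε`-chance constraint set `Z^P`. -/
theorem stmt7 {W : Type*} [MeasurableSpace W] (P : Measure W) [IsProbabilityMeasure P]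
    {q n : ℕ} (G : W → Matrix (Fin q) (Fin n) ℝ) (g : W → Fin q → ℝ)
    (hG : Measurable G) (hg : Measurable g)
    (Z : W → Set (Fin n → ℝ)) (hZ : ∀ w, Z w = {ζ | (G w).mulVec ζ ≤ g w})
    (hZbdd : ∀ w, Bornology.IsBounded (Z w))
    (ζc : Fin n → ℝ) (hζc : ∀ w, ζc ∈ Z w)
    (S : Set (Fin n → ℝ)) (hScomp : IsCompact S) (hSconv : Convex ℝ S)
    (h0S : (0 : Fin n → ℝ) ∈ S) (hSne : S ≠ {0})
    (σ : W → ℝ)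
    (hσ : ∀ w, IsGreatest {s : ℝ | 0 ≤ s ∧ (fun x => ζc + s • x) '' S ⊆ Z w} (σ w))
    (hσmeas : Measurable σ)
    (ε β : ℝ) (hε : ε ∈ Set.Ioo (0 : ℝ) 1) (hβ : β ∈ Set.Ioo (0 : ℝ) 1)
    (N : ℕ) (hN : (1 + Real.sqrt 3) ^ 2 * Real.log (1 / β) / ε ≤ (N : ℝ))
    {Ω : Type*} [MeasurableSpace Ω] (Q : Measure Ω) [IsProbabilityMeasure Q]
    (w : Fin N → Ω → W) (hwmeas : ∀ i, Measurable (w i))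
    (hwindep : ProbabilityTheory.iIndepFun w Q)
    (hwlaw : ∀ i, Q.map (w i) = P) :
    Q {ω | (fun s => ζc + (orderStat (fun i => σ (w i ω)) ⌈ε * (N : ℝ) / 2⌉₊) • s) '' S ⊆
        {ζ : Fin n → ℝ | P {v | (G v).mulVec ζ ≤ g v} ≥ ENNReal.ofReal (1 - ε)}} ≥
      ENNReal.ofReal (1 - β) := by
  obtain ⟨hε0, hε1⟩ := hε
  obtain ⟨hβ0, hβ1⟩ := hβ
  set L : ℝ := Real.log (1 / β) with hLdef
  have hσ0 : ∀ v, 0 ≤ σ v := fun v => (hσ v).1.1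
  have hL : 0 < L := Real.log_pos (by rw [lt_div_iff₀ hβ0]; linarith)
  have hsqrt3 : (1.7 : ℝ) ≤ Real.sqrt 3 := by
    rw [show (1.7 : ℝ) = Real.sqrt (1.7 ^ 2) by rw [Real.sqrt_sq]; norm_num]
    exact Real.sqrt_le_sqrt (by norm_num)
  have hsq3 : Real.sqrt 3 ^ 2 = 3 := Real.sq_sqrt (by norm_num)
  have hεN : (4 + 2 * Real.sqrt 3) * L ≤ ε * N := by
    have h1 : (1 + Real.sqrt 3) ^ 2 * L ≤ (N : ℝ) * ε := (div_le_iff₀ hε0).mp hN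
    nlinarith
  have hNr : (0 : ℝ) < (N : ℝ) := by
    by_contra h
    push_neg at h
    nlinarith [Real.sqrt_nonneg 3]
  set r : ℕ := ⌈ε * (N : ℝ) / 2⌉₊ with hrdef
  have hr1 : 1 ≤ r := Nat.one_le_ceil_iff.mpr (by positivity)
  set k : ℕ := r - 1 with hkdef
  have hkr : (k : ℝ) = (r : ℝ) - 1 := by
    rw [hkdef, Nat.cast_sub hr1, Nat.cast_one]
  have hklt : (k : ℝ) < ε * N / 2 := by
    have := Nat.ceil_lt_add_one (R := ℝ) (show (0:ℝ) ≤ ε * N / 2 by positivity)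
    rw [hkr]; rw [hrdef] at *; linarith
  -- the ε-quantile of σ
  set Tset : Set ℝ := {t : ℝ | ENNReal.ofReal ε ≤ P {v | σ v ≤ t}} with hTdef
  have hεpos' : (0 : ℝ≥0∞) < ENNReal.ofReal ε := ENNReal.ofReal_pos.mpr hε0
  have hTlb : ∀ t ∈ Tset, (0 : ℝ) ≤ t := by
    intro t ht
    by_contra hneg
    push_neg at hneg
    have hemp : {v | σ v ≤ t} = ∅ := by
      ext v; simp only [Set.mem_setOf_eq, Set.mem_empty_iff_false, iff_false, not_le]
      exact lt_of_lt_of_le hneg (hσ0 v)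
    rw [hTdef] at ht
    simp only [Set.mem_setOf_eq, hemp, measure_empty] at ht
    exact absurd (lt_of_lt_of_le hεpos' ht) (lt_irrefl _)
  have hTbdd : BddBelow Tset := ⟨0, hTlb⟩
  have hTne : Tset.Nonempty := by
    by_contra hc
    rw [Set.not_nonempty_iff_eq_empty] at hc
    have hmono : Monotone (fun m : ℕ => {v | σ v ≤ (m : ℝ)}) := by
      intro a b hab v hv
      simp only [Set.mem_setOf_eq] at hv ⊢
      exact le_trans hv (Nat.cast_le.mpr hab)
    have huniv : (⋃ m : ℕ, {v | σ v ≤ (m : ℝ)}) = Set.univ := by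
      ext v
      simp only [Set.mem_iUnion, Set.mem_setOf_eq, Set.mem_univ, iff_true]
      exact exists_nat_ge (σ v)
    have h1 : (1 : ℝ≥0∞) = ⨆ m : ℕ, P {v | σ v ≤ (m : ℝ)} := by
      rw [← hmono.measure_iUnion, huniv, measure_univ]
    have h2 : (1 : ℝ≥0∞) ≤ ENNReal.ofReal ε := by
      rw [h1]
      refine iSup_le fun m => ?_
      by_contra h3
      push_neg at h3
      have : (m : ℝ) ∈ Tset := h3.le
      rw [hc] at this
      exact this
    exact absurd (lt_of_le_of_lt h2 (ENNReal.ofReal_lt_one.mpr hε1)) (lt_irrefl _)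
  set qε : ℝ := sInf Tset with hqdef
  have hqle : ENNReal.ofReal ε ≤ P {v | σ v ≤ qε} := by
    have hanti : Antitone (fun m : ℕ => {v | σ v ≤ qε + 1 / (m + 1)}) := by
      intro a b hab v hv
      have : (1 : ℝ) / (b + 1) ≤ 1 / (a + 1) := by
        apply one_div_le_one_div_of_le (by positivity)
        exact_mod_cast add_le_add_left (Nat.cast_le.mpr hab) 1
      simp only [Set.mem_setOf_eq] at hv ⊢
      linarith
    have hiInter : (⋂ m : ℕ, {v | σ v ≤ qε + 1 / (m + 1)}) = {v | σ v ≤ qε} := by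
      ext v
      simp only [Set.mem_iInter, Set.mem_setOf_eq]
      constructor
      · intro h
        by_contra hlt
        push_neg at hlt
        obtain ⟨m, hm⟩ := exists_nat_one_div_lt (sub_pos.mpr hlt)
        have := h m
        push_cast at hm this
        linarith
      · intro h m
        have : (0 : ℝ) < 1 / ((m : ℝ) + 1) := by positivity
        linarith
    have heach : ∀ m : ℕ, ENNReal.ofReal ε ≤ P {v | σ v ≤ qε + 1 / (m + 1)} := by
      intro m
      have hlt : qε < qε + 1 / ((m : ℝ) + 1) := by
        have : (0 : ℝ) < 1 / ((m : ℝ) + 1) := by positivity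
        linarith
      obtain ⟨t, htT, htlt⟩ := (csInf_lt_iff hTbdd hTne).mp hlt
      refine le_trans htT (measure_mono fun v hv => ?_)
      simp only [Set.mem_setOf_eq] at *
      linarith
    rw [← hiInter, hanti.measure_iInter
      (fun m => ((hσmeas measurableSet_Iic).nullMeasurableSet))
      ⟨0, measure_ne_top _ _⟩]
    exact le_iInf heach
  have hqlt : P {v | σ v < qε} ≤ ENNReal.ofReal ε := by
    have hmono : Monotone (fun m : ℕ => {v | σ v ≤ qε - 1 / (m + 1)}) := by
      intro a b hab v hv
      have : (1 : ℝ) / (b + 1) ≤ 1 / (a + 1) := by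
        apply one_div_le_one_div_of_le (by positivity)
        exact_mod_cast add_le_add_left (Nat.cast_le.mpr hab) 1
      simp only [Set.mem_setOf_eq] at *
      linarith
    have hiUnion : (⋃ m : ℕ, {v | σ v ≤ qε - 1 / (m + 1)}) = {v | σ v < qε} := by
      ext v
      simp only [Set.mem_iUnion, Set.mem_setOf_eq]
      constructor
      · rintro ⟨m, hm⟩
        have : (0 : ℝ) < 1 / ((m : ℝ) + 1) := by positivity
        linarith
      · intro h
        obtain ⟨m, hm⟩ := exists_nat_one_div_lt (sub_pos.mpr h)
        exact ⟨m, by push_cast at hm ⊢; linarith⟩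
    have heach : ∀ m : ℕ, P {v | σ v ≤ qε - 1 / (m + 1)} ≤ ENNReal.ofReal ε := by
      intro m
      by_contra h
      push_neg at h
      have hmem : qε - 1 / ((m : ℝ) + 1) ∈ Tset := h.le
      have := csInf_le hTbdd hmem
      have hp : (0 : ℝ) < 1 / ((m : ℝ) + 1) := by positivity
      rw [← hqdef] at this
      linarith
    rw [← hiUnion, hmono.measure_iUnion]
    exact iSup_le heach
  -- the good event
  set E : Set Ω := {ω | r ≤ (Finset.univ.filter fun i => σ (w i ω) ≤ qε).card} with hEdef
  -- deterministic part: E is contained in the target event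
  have hdet : E ⊆ {ω | (fun s => ζc + (orderStat (fun i => σ (w i ω)) ⌈ε * (N : ℝ) / 2⌉₊) • s) '' S ⊆
      {ζ : Fin n → ℝ | P {v | (G v).mulVec ζ ≤ g v} ≥ ENNReal.ofReal (1 - ε)}} := by
    intro ω hω
    simp only [hEdef, Set.mem_setOf_eq] at hω
    set σs : ℝ := orderStat (fun i => σ (w i ω)) r with hσsdef
    have hOlb : ∀ x ∈ {x : ℝ | r ≤ (Finset.univ.filter fun i => σ (w i ω) ≤ x).card},
        (0 : ℝ) ≤ x := by
      intro x hx
      simp only [Set.mem_setOf_eq] at hx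
      have hpos : 0 < (Finset.univ.filter fun i => σ (w i ω) ≤ x).card :=
        lt_of_lt_of_le hr1 hx
      obtain ⟨i, hi⟩ := Finset.card_pos.mp hpos
      exact le_trans (hσ0 _) (Finset.mem_filter.mp hi).2
    have hOset : qε ∈ {x : ℝ | r ≤ (Finset.univ.filter fun i => σ (w i ω) ≤ x).card} := hω
    have hσsle : σs ≤ qε := csInf_le ⟨0, hOlb⟩ hOset
    have hσs0 : 0 ≤ σs := le_csInf ⟨qε, hOset⟩ hOlb
    intro ζ hζ
    obtain ⟨s, hs, rfl⟩ := hζ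
    simp only [Set.mem_setOf_eq, ge_iff_le]
    have hsub : {v | σs ≤ σ v} ⊆ {v | (G v).mulVec (ζc + σs • s) ≤ g v} := by
      intro v hv
      simp only [Set.mem_setOf_eq] at hv ⊢
      have hZv : ζc + σs • s ∈ Z v := by
        rcases eq_or_lt_of_le (hσ0 v) with h0 | hpos
        · have h00 : σs = 0 := le_antisymm (h0 ▸ hv) hσs0
          rw [h00, zero_smul, add_zero]
          exact hζc v
        · set c : ℝ := σs / σ v with hcdef
          have hc0 : 0 ≤ c := div_nonneg hσs0 hpos.le
          have hc1 : c ≤ 1 := (div_le_one hpos).mpr hv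
          have hmem : ζc + σ v • s ∈ Z v := (hσ v).1.2 ⟨s, hs, rfl⟩
          have hconv : Convex ℝ (Z v) := by rw [hZ v]; exact convex_polyZ _ _
          have hcc := hconv (hζc v) hmem (by linarith : (0:ℝ) ≤ 1 - c) hc0 (by ring)
          have hcs : c * σ v = σs := div_mul_cancel₀ σs hpos.ne'
          have heq : (1 - c) • ζc + c • (ζc + σ v • s) = ζc + σs • s := by
            rw [smul_add, smul_smul, hcs, sub_smul, one_smul]
            abel
          rwa [heq] at hcc
      rw [hZ v] at hZv
      exact hZv
    have h1 : P {v | σ v < σs} ≤ ENNReal.ofReal ε := by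
      refine le_trans (measure_mono fun v hv => ?_) hqlt
      simp only [Set.mem_setOf_eq] at hv ⊢
      exact lt_of_lt_of_le hv hσsle
    have h2 : ENNReal.ofReal (1 - ε) ≤ P {v | σs ≤ σ v} := by
      have hcompl : {v | σs ≤ σ v} = {v | σ v < σs}ᶜ := by
        ext v; simp [not_lt]
      rw [hcompl, prob_compl_eq_one_sub (measurableSet_lt hσmeas measurable_const),
        ENNReal.ofReal_sub 1 hε0.le, ENNReal.ofReal_one]
      exact tsub_le_tsub_left h1 1
    exact le_trans h2 (measure_mono hsub)
  -- probabilistic part: Eᶜ has probability at most β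
  have hprob : Q Eᶜ ≤ ENNReal.ofReal β := by
    classical
    set A : Set W := {v | σ v ≤ qε} with hAdef
    have hA : MeasurableSet A := hσmeas measurableSet_Iic
    set p : ℝ := (P A).toReal with hpdef
    have hpε : ε ≤ p :=
      (ENNReal.ofReal_le_iff_le_toReal (measure_ne_top _ _)).mp hqle
    have hp1 : p ≤ 1 := by
      have := ENNReal.toReal_mono (b := 1) (by norm_num) (prob_le_one (μ := P) (s := A))
      simpa using this
    have h0p : (0 : ℝ) ≤ 1 - p / 2 := by linarith
    set f : W → ℝ := fun v => if σ v ≤ qε then 1 else 0 with hfdef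
    have hfmeas : Measurable f := Measurable.ite hA measurable_const measurable_const
    set Y : Fin N → Ω → ℝ := fun i => f ∘ w i with hYdef
    have hYmeas : ∀ i, Measurable (Y i) := fun i => hfmeas.comp (hwmeas i)
    have hYindep : ProbabilityTheory.iIndepFun Y Q :=
      hwindep.comp (fun _ => f) (fun _ => hfmeas)
    set t : ℝ := -Real.log 2 with htdef
    have ht : t ≤ 0 := neg_nonpos.mpr (Real.log_nonneg one_le_two)
    have hexpt : Real.exp t = 1 / 2 := by
      rw [htdef, Real.exp_neg, Real.exp_log two_pos]
      norm_num
    have key : ∀ i, Integrable (fun ω => Real.exp (t * Y i ω)) Q ∧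
        ProbabilityTheory.mgf (Y i) Q t = 1 - p / 2 := by
      intro i
      have hB : MeasurableSet (w i ⁻¹' A) := (hwmeas i) hA
      have hQB : Q (w i ⁻¹' A) = P A := by
        rw [← hwlaw i, Measure.map_apply (hwmeas i) hA]
      have hfun : (fun ω => Real.exp (t * Y i ω)) =
          fun ω => Set.indicator (w i ⁻¹' A) (fun _ => Real.exp t - 1) ω + 1 := by
        funext ω
        by_cases hmem : ω ∈ w i ⁻¹' A
        · have hY1 : Y i ω = 1 := by
            simp only [hYdef, hfdef, Function.comp_apply]
            exact if_pos hmem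
          rw [Set.indicator_of_mem hmem, hY1, mul_one]
          ring
        · have hY0 : Y i ω = 0 := by
            simp only [hYdef, hfdef, Function.comp_apply]
            exact if_neg hmem
          rw [Set.indicator_of_notMem hmem, hY0, mul_zero, Real.exp_zero]
          ring
      have hint : Integrable (fun ω => Real.exp (t * Y i ω)) Q := by
        rw [hfun]
        exact ((integrable_const _).indicator hB).add (integrable_const 1)
      refine ⟨hint, ?_⟩
      rw [ProbabilityTheory.mgf, hfun, integral_add ((integrable_const _).indicator hB)
        (integrable_const 1), integral_indicator_const _ hB, integral_const]
      simp only [measureReal_def, measure_univ, ENNReal.toReal_one, smul_eq_mul, one_mul, hQB]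
      rw [hexpt, ← hpdef]
      ring
    have hTsum := hYindep.mgf_sum (t := t) hYmeas Finset.univ
    have hintT : Integrable (fun ω => Real.exp (t * (∑ i : Fin N, Y i) ω)) Q :=
      ProbabilityTheory.iIndepFun.integrable_exp_mul_sum hYindep hYmeas
        (fun i _ => (key i).1)
    have hcher := ProbabilityTheory.measure_le_le_exp_mul_mgf (X := ∑ i : Fin N, Y i)
      (μ := Q) (k : ℝ) ht hintT
    have hEc : Eᶜ ⊆ {ω | (∑ i : Fin N, Y i) ω ≤ (k : ℝ)} := by
      intro ω hω
      simp only [hEdef, Set.mem_compl_iff, Set.mem_setOf_eq, not_le] at hω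
      have hcard : (∑ i : Fin N, Y i) ω =
          ((Finset.univ.filter fun i => σ (w i ω) ≤ qε).card : ℝ) := by
        simp only [Finset.sum_apply, hYdef, hfdef, Function.comp_apply]
        rw [Finset.sum_boole]
      have hle : (Finset.univ.filter fun i => σ (w i ω) ≤ qε).card ≤ k :=
        Nat.le_sub_one_of_lt hω
      simp only [Set.mem_setOf_eq, hcard]
      exact_mod_cast hle
    have hnum : Real.exp (-t * (k : ℝ)) * (1 - p / 2) ^ N ≤ β := by
      have hlog2 : (0 : ℝ) ≤ Real.log 2 := Real.log_nonneg one_le_two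
      have e1 : (1 - p / 2 : ℝ) ^ N ≤ Real.exp (-(ε * N) / 2) := by
        have h1 : (1 - p / 2 : ℝ) ≤ Real.exp (-(p / 2)) := by
          have := Real.add_one_le_exp (-(p / 2))
          linarith
        calc (1 - p / 2 : ℝ) ^ N ≤ Real.exp (-(p / 2)) ^ N := pow_le_pow_left₀ h0p h1 N
          _ = Real.exp ((N : ℝ) * (-(p / 2))) := (Real.exp_nat_mul _ N).symm
          _ ≤ Real.exp (-(ε * N) / 2) := by
              apply Real.exp_le_exp.mpr
              nlinarith [hNr.le]
      have e2 : Real.exp (-t * (k : ℝ)) ≤ Real.exp (Real.log 2 * (ε * N / 2)) := by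
        apply Real.exp_le_exp.mpr
        rw [htdef, neg_neg]
        exact mul_le_mul_of_nonneg_left hklt.le (Real.log_nonneg one_le_two)
      calc Real.exp (-t * (k : ℝ)) * (1 - p / 2) ^ N
          ≤ Real.exp (Real.log 2 * (ε * N / 2)) * Real.exp (-(ε * N) / 2) :=
            mul_le_mul e2 e1 (pow_nonneg h0p N) (Real.exp_nonneg _)
        _ = Real.exp (ε * N / 2 * (Real.log 2 - 1)) := by
            rw [← Real.exp_add]
            congr 1
            ring
        _ ≤ Real.exp (-L) := by
            apply Real.exp_le_exp.mpr
            nlinarith [hεN, hL, hsqrt3, Real.log_two_lt_d9]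
        _ = β := by rw [hLdef, one_div, Real.log_inv, neg_neg, Real.exp_log hβ0]
    have hfinal : (Q Eᶜ).toReal ≤ β := by
      have hmono := ENNReal.toReal_mono (measure_ne_top Q _) (measure_mono hEc)
      refine le_trans hmono (le_trans hcher ?_)
      rw [hTsum]
      have hprodeq : (∏ i : Fin N, ProbabilityTheory.mgf (Y i) Q t) = (1 - p / 2) ^ N := by
        rw [Finset.prod_congr rfl (fun i _ => (key i).2), Finset.prod_const,
          Finset.card_univ, Fintype.card_fin]
      rw [hprodeq]
      exact hnum
    exact (ENNReal.le_ofReal_iff_toReal_le (measure_ne_top Q Eᶜ) hβ0.le).mpr hfinal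
  calc ENNReal.ofReal (1 - β) = 1 - ENNReal.ofReal β := by
        rw [ENNReal.ofReal_sub 1 hβ0.le, ENNReal.ofReal_one]
    _ ≤ 1 - Q Eᶜ := tsub_le_tsub_left hprob 1
    _ ≤ Q E := by
        rw [tsub_le_iff_right]
        calc (1 : ℝ≥0∞) = Q (E ∪ Eᶜ) := by rw [Set.union_compl_self, measure_univ]
          _ ≤ Q E + Q Eᶜ := measure_union_le _ _
    _ ≤ _ := measure_mono hdet
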